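/- arXiv:2301.06354 — 2 statements merged into one kernel-verified Lean document; each statement's English description precedes it below -/
import Mathlib

section
/- Let δ be an m×r binary matrix with unordered GLT structure satisfying the 3579 counting rule CR(r,1): every combination of q ∈ {1,…,r} columns of δ has at least 2q+1 nonzero rows. Then, outside a set of Lebesgue measure zero in the parametrization of Θ_δ by the nonzero entries, every Λ̃ ∈ Θ_δ is variance identified: whenever Λ̃ Λ̃ᵀ + Σ̃ = Λ' Λ'ᵀ + Σ' with Σ̃, Σ' diagonal positive definite m×m matrices and Λ' an m×r unordered GLT matrix, it follows that Σ' = Σ̃, Λ' Λ'ᵀ = Λ̃ Λ̃ᵀ, and Λ' = Λ̃ P_± P_ρ for some signed permutation matrix P_± P_ρ. -/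
open Matrix

/-- The counting rule `CR(r,s)`: every submatrix formed by a nonempty set `S` of
columns has at least `2 * |S| + s` nonzero rows. -/
def CR {I : Type*} [Fintype I] {r : ℕ} (δ : Matrix I (Fin r) Bool) (s : ℕ) : Prop :=
  ∀ S : Finset (Fin r), S.Nonempty →
    2 * S.card + s ≤ (@Finset.filter I (fun i : I => ∃ j ∈ S, δ i j = true)
      (fun _ => inferInstance) Finset.univ).card

/-- A binary matrix with unordered GLT structure: pairwise distinct pivot rows. -/
def IsGLTBool {m r : ℕ} (δ : Matrix (Fin m) (Fin r) Bool) : Prop :=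
  ∃ l : Fin r → Fin m, Function.Injective l ∧
    ∀ j : Fin r, δ (l j) j = true ∧ ∀ i : Fin m, i < l j → δ i j = false

/-- `Λ` is an unordered GLT matrix. -/
def IsUnorderedGLT {m r : ℕ} (Λ : Matrix (Fin m) (Fin r) ℝ) : Prop :=
  Λ.rank = r ∧ ∃ l : Fin r → Fin m, Function.Injective l ∧
    ∀ j : Fin r, (∀ i : Fin m, i < l j → Λ i j = 0) ∧ Λ (l j) j ≠ 0

/-- `P` is a signed permutation matrix. -/
def IsSignedPerm {r : ℕ} (P : Matrix (Fin r) (Fin r) ℝ) : Prop :=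
  ∃ (σ : Equiv.Perm (Fin r)) (ε : Fin r → ℝ), (∀ j, ε j = 1 ∨ ε j = -1) ∧
    ∀ i j, P i j = if σ i = j then ε i else 0

/-- The matrix with sparsity pattern `δ` whose entries at the positions of the
ones of `δ` are the coordinates of the parameter vector `x`. -/
def matrixOfPattern {m r : ℕ} (δ : Matrix (Fin m) (Fin r) Bool)
    (x : {p : Fin m × Fin r // δ p.1 p.2 = true} → ℝ) : Matrix (Fin m) (Fin r) ℝ :=
  Matrix.of fun i j => if h : δ i j = true then x ⟨(i, j), h⟩ else 0

/-- `Λ` is variance identified: whenever `Λ Λᵀ + Σ = Λ' Λ'ᵀ + Σ'` with `Σ`, `Σ'`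
diagonal positive definite and `Λ'` an unordered GLT matrix, then `Σ' = Σ`,
`Λ' Λ'ᵀ = Λ Λᵀ` and `Λ'` is a signed permutation of `Λ`. -/
def VarianceIdentified {m r : ℕ} (Λ : Matrix (Fin m) (Fin r) ℝ) : Prop :=
  ∀ (Λ' : Matrix (Fin m) (Fin r) ℝ) (d d' : Fin m → ℝ),
    (∀ i, 0 < d i) → (∀ i, 0 < d' i) → IsUnorderedGLT Λ' →
    Λ * Λᵀ + Matrix.diagonal d = Λ' * Λ'ᵀ + Matrix.diagonal d' →
    Matrix.diagonal d' = Matrix.diagonal d ∧ Λ' * Λ'ᵀ = Λ * Λᵀ ∧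
      ∃ P : Matrix (Fin r) (Fin r) ℝ, IsSignedPerm P ∧ Λ' = Λ * P

open MeasureTheory

lemma mvpoly_zero_null_fin : ∀ (n : ℕ) (p : MvPolynomial (Fin n) ℝ), p ≠ 0 →
    volume {x : Fin n → ℝ | MvPolynomial.eval x p = 0} = 0 := by
  intro n
  induction n with
  | zero =>
    intro p hp
    obtain ⟨c, rfl⟩ := MvPolynomial.C_surjective (Fin 0) p
    have hc : c ≠ 0 := fun h => hp (by simp [h])
    have h : {x : Fin 0 → ℝ | MvPolynomial.eval x (MvPolynomial.C c) = 0} = ∅ := by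
      ext x; simp [hc]
    rw [h]; simp
  | succ n ih =>
    intro p hp
    set q := MvPolynomial.finSuccEquiv ℝ n p with hqdef
    have hq0 : q ≠ 0 := by
      simp only [hqdef, ne_eq, EmbeddingLike.map_eq_zero_iff]
      exact hp
    set T : Set (ℝ × (Fin n → ℝ)) :=
      {z | Polynomial.eval z.1 (Polynomial.map (MvPolynomial.eval z.2) q) = 0} with hTdef
    have hTalt : T = {z : ℝ × (Fin n → ℝ) | MvPolynomial.eval (Fin.cons z.1 z.2) p = 0} := by
      ext z
      simp only [hTdef, Set.mem_setOf_eq, MvPolynomial.eval_eq_eval_mv_eval', hqdef]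
    have hTmeas : MeasurableSet T := by
      have hcont : Continuous fun z : ℝ × (Fin n → ℝ) =>
          MvPolynomial.eval (Fin.cons z.1 z.2) p := by
        have h1 : Continuous fun z : ℝ × (Fin n → ℝ) => (Fin.cons z.1 z.2 : Fin (n+1) → ℝ) := by
          refine continuous_pi fun i => ?_
          refine Fin.cases ?_ ?_ i
          · simpa using continuous_fst
          · intro j; simp only [Fin.cons_succ]; exact (continuous_apply j).comp continuous_snd
        exact (MvPolynomial.continuous_eval p).comp h1
      rw [hTalt]
      exact (isClosed_eq hcont continuous_const).measurableSet
    have hmp := MeasureTheory.measurePreserving_piFinSuccAbove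
      (fun _ : Fin (n+1) => (volume : Measure ℝ)) 0
    have hpre : {x : Fin (n+1) → ℝ | MvPolynomial.eval x p = 0} =
        (MeasurableEquiv.piFinSuccAbove (fun _ => ℝ) 0) ⁻¹' T := by
      ext x
      simp only [Set.mem_setOf_eq, Set.mem_preimage, hTalt, MeasurableEquiv.piFinSuccAbove_apply,
        MeasurableEquiv.coe_mk, Fin.insertNthEquiv_symm_apply, Fin.removeNth_zero,
        Fin.cons_self_tail]
    have hvol : volume {x : Fin (n+1) → ℝ | MvPolynomial.eval x p = 0} =
        (volume.prod (volume : Measure (Fin n → ℝ))) T := by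
      rw [hpre]
      exact hmp.measure_preimage hTmeas.nullMeasurableSet
    rw [hvol, Measure.prod_apply_symm hTmeas]
    have hae : ∀ᵐ s : Fin n → ℝ, volume ((fun y => (y, s)) ⁻¹' T) = 0 := by
      have hlead : q.coeff q.natDegree ≠ 0 :=
        Polynomial.leadingCoeff_ne_zero.mpr hq0
      have h1 : volume {s : Fin n → ℝ |
          MvPolynomial.eval s (q.coeff q.natDegree) = 0} = 0 := ih _ hlead
      rw [MeasureTheory.ae_iff]
      refine measure_mono_null ?_ h1
      intro s hs
      simp only [Set.mem_setOf_eq, Set.mem_compl_iff, not_not] at hs ⊢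
      by_contra hev
      apply hs
      have hqs : Polynomial.map (MvPolynomial.eval s) q ≠ 0 := by
        intro h0
        apply hev
        have := congrArg (fun P => Polynomial.coeff P q.natDegree) h0
        simpa [Polynomial.coeff_map] using this
      have hfin : {y : ℝ | Polynomial.eval y (Polynomial.map (MvPolynomial.eval s) q) = 0}.Finite :=
        Polynomial.finite_setOf_isRoot hqs
      have : ((fun y => (y, s)) ⁻¹' T) =
          {y : ℝ | Polynomial.eval y (Polynomial.map (MvPolynomial.eval s) q) = 0} := by
        ext y; simp [hTdef]
      rw [this]
      exact hfin.measure_zero _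
    calc ∫⁻ s, volume ((fun y => (y, s)) ⁻¹' T) ∂volume = ∫⁻ _, 0 ∂volume :=
          lintegral_congr_ae hae
      _ = 0 := lintegral_zero

lemma mvpoly_zero_null {ι : Type*} [Fintype ι] (p : MvPolynomial ι ℝ) (hp : p ≠ 0) :
    volume {x : ι → ℝ | MvPolynomial.eval x p = 0} = 0 := by
  classical
  obtain ⟨e⟩ := Fintype.truncEquivFin ι
  set f : Fin (Fintype.card ι) ≃ ι := e.symm with hfdef
  have hmp := MeasureTheory.measurePreserving_piCongrLeft
    (fun _ : ι => (volume : Measure ℝ)) f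
  set S := {x : ι → ℝ | MvPolynomial.eval x p = 0} with hSdef
  have hSmeas : MeasurableSet S :=
    (isClosed_eq (MvPolynomial.continuous_eval p) continuous_const).measurableSet
  have hvol : volume S = volume ((MeasurableEquiv.piCongrLeft (fun _ => ℝ) f) ⁻¹' S) :=
    (hmp.measure_preimage hSmeas.nullMeasurableSet).symm
  rw [hvol]
  have hq : MvPolynomial.rename f.symm p ≠ 0 :=
    fun h => hp (MvPolynomial.rename_injective _ f.symm.injective (by simpa using h))
  have hpre : (MeasurableEquiv.piCongrLeft (fun _ => ℝ) f) ⁻¹' S =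
      {x : Fin (Fintype.card ι) → ℝ | MvPolynomial.eval x (MvPolynomial.rename f.symm p) = 0} := by
    ext x
    simp only [Set.mem_preimage, hSdef, Set.mem_setOf_eq, MvPolynomial.eval_rename]
    have : (MeasurableEquiv.piCongrLeft (fun _ => ℝ) f) x = x ∘ f.symm := by
      ext i
      simp [MeasurableEquiv.piCongrLeft, Equiv.piCongrLeft]
    rw [this]
  rw [hpre]
  exact mvpoly_zero_null_fin _ _ hq

lemma IsSignedPerm.mul_transpose {r : ℕ} {P : Matrix (Fin r) (Fin r) ℝ}
    (h : IsSignedPerm P) : P * Pᵀ = 1 := by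
  obtain ⟨σ, ε, hε, hP⟩ := h
  ext i j
  rw [Matrix.mul_apply]
  rw [Finset.sum_eq_single (σ i)]
  · simp only [transpose_apply, hP]
    rcases eq_or_ne i j with rfl | hne
    · simp only [if_pos rfl, Matrix.one_apply_eq]
      rcases hε i with h1 | h1 <;> simp [h1]
    · have : σ j ≠ σ i := fun hc => hne (σ.injective hc).symm
      simp [this, Matrix.one_apply_ne hne]
  · intro b _ hb
    simp [hP, Ne.symm hb]
  · simp
lemma IsSignedPerm.transpose_mul {r : ℕ} {P : Matrix (Fin r) (Fin r) ℝ}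
    (h : IsSignedPerm P) : Pᵀ * P = 1 :=
  mul_eq_one_comm.mp h.mul_transpose

lemma IsSignedPerm.transpose {r : ℕ} {P : Matrix (Fin r) (Fin r) ℝ}
    (h : IsSignedPerm P) : IsSignedPerm Pᵀ := by
  obtain ⟨σ, ε, hε, hP⟩ := h
  refine ⟨σ.symm, fun i => ε (σ.symm i), fun i => hε _, fun i j => ?_⟩
  rw [transpose_apply, hP]
  rcases eq_or_ne (σ.symm i) j with rfl | hne
  · simp
  · have : σ j ≠ i := fun hc => hne (by simp [← hc])
    simp [this, hne]

lemma IsSignedPerm.mul {r : ℕ} {P Q : Matrix (Fin r) (Fin r) ℝ}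
    (hP : IsSignedPerm P) (hQ : IsSignedPerm Q) : IsSignedPerm (P * Q) := by
  obtain ⟨σ, ε, hε, hP⟩ := hP
  obtain ⟨τ, η, hη, hQ⟩ := hQ
  refine ⟨σ.trans τ, fun i => ε i * η (σ i), fun i => by
    rcases hε i with h1 | h1 <;> rcases hη (σ i) with h2 | h2 <;> simp [h1, h2], fun i j => ?_⟩
  rw [Matrix.mul_apply, Finset.sum_eq_single (σ i)]
  · rw [hP, hQ, if_pos rfl]
    rcases eq_or_ne (τ (σ i)) j with h | h
    · simp [h, Equiv.trans_apply]
    · simp [h, Equiv.trans_apply]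
  · intro b _ hb; simp [hP, Ne.symm hb]
  · simp

/-- Key pivot lemma: if `Λ' = Λ * M`, both with GLT pivot structure, then entries of `M`
"below" the pivot order vanish. -/
lemma pivot_vanish {m r : ℕ} {Λ Λ' : Matrix (Fin m) (Fin r) ℝ} {M : Matrix (Fin r) (Fin r) ℝ} {l l' : Fin r → Fin m}
    (hli : Function.Injective l)
    (hz : ∀ j : Fin r, ∀ i : Fin m, i < l j → Λ i j = 0)
    (hpv : ∀ j : Fin r, Λ (l j) j ≠ 0)
    (hz' : ∀ k : Fin r, ∀ i : Fin m, i < l' k → Λ' i k = 0)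
    (hE : Λ' = Λ * M) :
    ∀ j k, l j < l' k → M j k = 0 := by
  suffices H : ∀ (n : ℕ) (j k : Fin r), (l j : ℕ) = n → l j < l' k → M j k = 0 by
    intro j k h; exact H (l j) j k rfl h
  intro n
  induction n using Nat.strong_induction_on with
  | _ n ih =>
    intro j k hn hlt
    have h0 : Λ' (l j) k = 0 := hz' k _ hlt
    rw [hE, Matrix.mul_apply, Finset.sum_eq_single j] at h0
    · exact (mul_eq_zero.mp h0).resolve_left (hpv j)
    · intro b _ hb
      rcases lt_trichotomy (l b) (l j) with h | h | h
      · have : M b k = 0 := ih (l b) (by omega) b k rfl (h.trans hlt)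
        rw [this, mul_zero]
      · exact absurd (hli (Fin.val_injective (by exact_mod_cast congrArg Fin.val h))) hb
      · rw [hz b (l j) h, zero_mul]
    · simp

lemma signed_perm_of_orth {m r : ℕ} {Λ Λ' : Matrix (Fin m) (Fin r) ℝ} {M : Matrix (Fin r) (Fin r) ℝ} {l l' : Fin r → Fin m}
    (hli : Function.Injective l) (hli' : Function.Injective l')
    (hz : ∀ j : Fin r, ∀ i : Fin m, i < l j → Λ i j = 0)
    (hpv : ∀ j : Fin r, Λ (l j) j ≠ 0)
    (hz' : ∀ k : Fin r, ∀ i : Fin m, i < l' k → Λ' i k = 0)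
    (hpv' : ∀ k : Fin r, Λ' (l' k) k ≠ 0)
    (hE : Λ' = Λ * M) (hMo : M * Mᵀ = 1) :
    IsSignedPerm M := by
  have hE' : Λ = Λ' * Mᵀ := by
    rw [hE, Matrix.mul_assoc, hMo, Matrix.mul_one]
  have h1 : ∀ j k, l j < l' k → M j k = 0 := pivot_vanish hli hz hpv hz' hE
  have h2 : ∀ k j, l' k < l j → M j k = 0 := by
    intro k j h
    have := pivot_vanish hli' hz' hpv' hz hE' k j h
    simpa using this
  have hne : ∀ j k, M j k ≠ 0 → l' k = l j := by
    intro j k h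
    rcases lt_trichotomy (l j) (l' k) with hc | hc | hc
    · exact absurd (h1 j k hc) h
    · exact hc.symm
    · exact absurd (h2 k j hc) h
  have hdiag : ∀ j, ∑ k, M j k * M j k = 1 := by
    intro j
    have := congrFun (congrFun hMo j) j
    simpa [Matrix.mul_apply, Matrix.one_apply] using this
  have hex : ∀ j, ∃ k, M j k ≠ 0 := by
    intro j
    by_contra hno
    push_neg at hno
    have := hdiag j
    simp [hno] at this
  choose κ hκ using hex
  have hκl : ∀ j, l' (κ j) = l j := fun j => hne j (κ j) (hκ j)
  have hκinj : Function.Injective κ := by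
    intro a b hab
    apply hli
    rw [← hκl a, ← hκl b, hab]
  have hbij := (Finite.injective_iff_bijective).mp hκinj
  set σ : Equiv.Perm (Fin r) := Equiv.ofBijective κ hbij with hσ
  have hoff : ∀ j k, k ≠ κ j → M j k = 0 := by
    intro j k hk
    by_contra h
    exact hk (hli' (by rw [hne j k h, ← hκl j]))
  have hsq : ∀ j, M j (κ j) * M j (κ j) = 1 := by
    intro j
    have := hdiag j
    rw [Finset.sum_eq_single (κ j)] at this
    · exact this
    · intro b _ hb; rw [hoff j b hb, mul_zero]
    · simp
  refine ⟨σ, fun j => M j (κ j), fun j => mul_self_eq_one_iff.mp (hsq j), fun i j => ?_⟩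
  rcases eq_or_ne (κ i) j with rfl | hb
  · simp [hσ, Equiv.ofBijective_apply]
  · rw [if_neg (by simpa [hσ, Equiv.ofBijective_apply] using hb), hoff i j (Ne.symm hb)]

-- full column rank of a GLT matrix
lemma glt_mulVec_injective {m r : ℕ} {Λ : Matrix (Fin m) (Fin r) ℝ} {l : Fin r → Fin m}
    (hli : Function.Injective l)
    (hz : ∀ j : Fin r, ∀ i : Fin m, i < l j → Λ i j = 0)
    (hpv : ∀ j : Fin r, Λ (l j) j ≠ 0) :
    Function.Injective Λ.mulVec := by
  have key : ∀ x : Fin r → ℝ, Λ.mulVec x = 0 → x = 0 := by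
    intro x hx
    by_contra hx0
    have hne : (Finset.univ.filter fun j => x j ≠ 0).Nonempty := by
      rcases Function.ne_iff.mp hx0 with ⟨j, hj⟩
      exact ⟨j, Finset.mem_filter.mpr ⟨Finset.mem_univ _, by simpa using hj⟩⟩
    obtain ⟨j₀, hj₀mem, hj₀min⟩ :=
      Finset.exists_min_image _ (fun j => l j) hne
    have hxj₀ : x j₀ ≠ 0 := by simpa using hj₀mem
    have h0 : Λ.mulVec x (l j₀) = 0 := congrFun hx (l j₀)
    rw [Matrix.mulVec, dotProduct, Finset.sum_eq_single j₀] at h0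
    · exact hxj₀ ((mul_eq_zero.mp h0).resolve_left (hpv j₀))
    · intro b _ hb
      rcases eq_or_ne (x b) 0 with h | h
      · rw [h, mul_zero]
      · have hble : l j₀ ≤ l b := hj₀min b (by simp [h])
        have : l j₀ < l b := lt_of_le_of_ne hble (fun hc => hb (hli hc.symm ▸ rfl))
        rw [hz b (l j₀) this, zero_mul]
    · simp
  intro x y hxy
  have : Λ.mulVec (x - y) = 0 := by
    rw [Matrix.mulVec_sub, hxy, sub_self]
  have := key _ this
  exact sub_eq_zero.mp this

lemma gram_isUnit {m r : ℕ} {Λ : Matrix (Fin m) (Fin r) ℝ}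
    (hinj : Function.Injective Λ.mulVec) : IsUnit (Λᵀ * Λ) := by
  rw [← Matrix.mulVec_injective_iff_isUnit]
  intro x y hxy
  apply hinj
  have h : ∀ z : Fin r → ℝ, (Λᵀ * Λ).mulVec z = 0 → Λ.mulVec z = 0 := by
    intro z hz
    have h1 : z ⬝ᵥ ((Λᵀ * Λ).mulVec z) = 0 := by rw [hz]; simp
    rw [← Matrix.mulVec_mulVec, Matrix.dotProduct_mulVec, Matrix.vecMul_transpose] at h1
    have h2 : (Λ.mulVec z) ⬝ᵥ (Λ.mulVec z) = 0 := h1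
    ext i
    have hnn : ∀ i, 0 ≤ (Λ.mulVec z i) * (Λ.mulVec z i) := fun i => mul_self_nonneg _
    have := (Finset.sum_eq_zero_iff_of_nonneg (fun i _ => hnn i)).mp h2 i (Finset.mem_univ i)
    simpa [mul_self_eq_zero] using this
  have hdiff : (Λᵀ * Λ).mulVec (x - y) = 0 := by
    rw [Matrix.mulVec_sub, hxy, sub_self]
  have := h _ hdiff
  rw [Matrix.mulVec_sub, sub_eq_zero] at this
  exact this

/-- From equality of the two Gram matrices, produce the orthogonal factor. -/
lemma exists_orth_factor {m r : ℕ} {Λ Λ' : Matrix (Fin m) (Fin r) ℝ}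
    (hinj : Function.Injective Λ.mulVec)
    (h : Λ' * Λ'ᵀ = Λ * Λᵀ) :
    ∃ M : Matrix (Fin r) (Fin r) ℝ, Λ' = Λ * M ∧ M * Mᵀ = 1 := by
  have hG : IsUnit (Λᵀ * Λ) := gram_isUnit hinj
  have hGd : IsUnit (Λᵀ * Λ).det := (Matrix.isUnit_iff_isUnit_det _).mp hG
  set G := Λᵀ * Λ with hGdef
  set K := Λ * G⁻¹ * Λᵀ with hKdef
  have hKΛ : K * Λ = Λ := by
    rw [hKdef, Matrix.mul_assoc, ← hGdef, Matrix.mul_assoc]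
    rw [Matrix.nonsing_inv_mul _ hGd, Matrix.mul_one]
  have hN : K * Λ' = Λ' := by
    have hNt : (K * Λ' - Λ') * Λ'ᵀ = 0 := by
      rw [Matrix.sub_mul, Matrix.mul_assoc, h, ← Matrix.mul_assoc, hKΛ, ← h, sub_self]
    have hNN : (K * Λ' - Λ') * (K * Λ' - Λ')ᵀ = 0 := by
      have hKt : Kᵀ = K := by
        rw [hKdef]
        simp only [Matrix.transpose_mul, Matrix.transpose_transpose]
        rw [Matrix.transpose_nonsing_inv]
        have : Gᵀ = G := by rw [hGdef]; simp [Matrix.transpose_mul]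
        rw [this, Matrix.mul_assoc]
      rw [Matrix.transpose_sub, Matrix.transpose_mul, hKt, Matrix.mul_sub]
      simp [← Matrix.mul_assoc, hNt]
    have : (K * Λ' - Λ') = 0 := by
      have := Matrix.self_mul_conjTranspose_eq_zero (A := K * Λ' - Λ')
      rw [← this]
      simpa [Matrix.conjTranspose_eq_transpose_of_trivial] using hNN
    rw [sub_eq_zero] at this
    exact this
  have hGinvT : G⁻¹ᵀ = G⁻¹ := by
    rw [Matrix.transpose_nonsing_inv]
    congr 1
    rw [hGdef]; simp [Matrix.transpose_mul]
  have e : ∀ X : Matrix (Fin r) (Fin r) ℝ, Λᵀ * (Λ * X) = G * X := fun X => by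
    rw [← Matrix.mul_assoc, ← hGdef]
  refine ⟨G⁻¹ * Λᵀ * Λ', ?_, ?_⟩
  · rw [← Matrix.mul_assoc, ← Matrix.mul_assoc, ← hKdef]
    exact hN.symm
  · have hMt : (G⁻¹ * Λᵀ * Λ')ᵀ = Λ'ᵀ * (Λ * G⁻¹) := by
      simp only [Matrix.transpose_mul, Matrix.transpose_transpose, hGinvT, Matrix.mul_assoc]
    rw [hMt]
    have expand : G⁻¹ * Λᵀ * Λ' * (Λ'ᵀ * (Λ * G⁻¹)) =
        G⁻¹ * (Λᵀ * (Λ' * (Λ'ᵀ * (Λ * G⁻¹)))) := by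
      simp only [Matrix.mul_assoc]
    rw [expand]
    have key : Λ' * (Λ'ᵀ * (Λ * G⁻¹)) = Λ * (Λᵀ * (Λ * G⁻¹)) := by
      rw [← Matrix.mul_assoc, h, Matrix.mul_assoc]
    rw [key, e, e, Matrix.mul_nonsing_inv _ hGd, Matrix.mul_one, Matrix.nonsing_inv_mul _ hGd]

/-- the Anderson-Rubin dot product identity -/
lemma dot_identity {r : ℕ} (G H : Matrix (Fin r) (Fin r) ℝ) (v : Fin r → ℝ)
    (hG : IsUnit G.det) (hH : IsUnit H.det) :
    (G *ᵥ v) ⬝ᵥ ((H * Gᵀ)⁻¹ *ᵥ (H *ᵥ v)) = v ⬝ᵥ v := by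
  rw [Matrix.mul_inv_rev, ← Matrix.mulVec_mulVec, Matrix.mulVec_mulVec v H⁻¹ H,
    Matrix.nonsing_inv_mul _ hH, Matrix.one_mulVec, ← Matrix.transpose_nonsing_inv,
    Matrix.dotProduct_mulVec, Matrix.vecMul_transpose, Matrix.mulVec_mulVec v G⁻¹ G,
    Matrix.nonsing_inv_mul _ hG, Matrix.one_mulVec]

theorem main_det {m r : ℕ} (Λ : Matrix (Fin m) (Fin r) ℝ) (l : Fin r → Fin m)
    (hli : Function.Injective l)
    (hz : ∀ j : Fin r, ∀ i : Fin m, i < l j → Λ i j = 0)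
    (hpv : ∀ j : Fin r, Λ (l j) j ≠ 0)
    (hAB : ∀ i : Fin m, ∃ A B : Fin r → Fin m,
      (∀ a b, A a ≠ B b) ∧ (∀ a, A a ≠ i) ∧ (∀ a, B a ≠ i) ∧
      IsUnit (Λ.submatrix A id).det ∧ IsUnit (Λ.submatrix B id).det) :
    VarianceIdentified Λ := by
  intro Λ' d d' hd hd' hglt' heq
  obtain ⟨hrank', l', hli', hglt'2⟩ := hglt'
  have hz' : ∀ k : Fin r, ∀ i : Fin m, i < l' k → Λ' i k = 0 := fun k i h => (hglt'2 k).1 i h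
  have hpv' : ∀ k, Λ' (l' k) k ≠ 0 := fun k => (hglt'2 k).2
  have hoff : ∀ p q, p ≠ q → (Λ * Λᵀ) p q = (Λ' * Λ'ᵀ) p q := by
    intro p q hpq
    have h1 := congrFun (congrFun heq p) q
    simpa [Matrix.add_apply, Matrix.diagonal_apply_ne _ hpq] using h1
  have hdd : ∀ i, d i = d' i := by
    intro i
    obtain ⟨A, B, hABdisj, hAi, hBi, hdetA, hdetB⟩ := hAB i
    set G := Λ.submatrix A id with hGdef
    set H := Λ.submatrix B id with hHdef
    set G' := Λ'.submatrix A id with hG'def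
    set H' := Λ'.submatrix B id with hH'def
    set lam : Fin r → ℝ := fun j => Λ i j with hlam
    set lam' : Fin r → ℝ := fun j => Λ' i j with hlam'
    set u : Fin r → ℝ := fun a => (Λ * Λᵀ) (A a) i with hu
    set w : Fin r → ℝ := fun b => (Λ * Λᵀ) (B b) i with hw
    set C : Matrix (Fin r) (Fin r) ℝ :=
      Matrix.of fun b a => (Λ * Λᵀ) (B b) (A a) with hC
    have huG : G *ᵥ lam = u := by
      funext a
      simp [hu, Matrix.mulVec, dotProduct, Matrix.mul_apply, hGdef, hlam]
    have hwH : H *ᵥ lam = w := by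
      funext b
      simp [hw, Matrix.mulVec, dotProduct, Matrix.mul_apply, hHdef, hlam]
    have huG' : G' *ᵥ lam' = u := by
      funext a
      have h2 : u a = (Λ' * Λ'ᵀ) (A a) i := by
        simp only [hu]; exact hoff (A a) i (hAi a)
      rw [h2]
      simp [Matrix.mulVec, dotProduct, Matrix.mul_apply, hG'def, hlam']
    have hwH' : H' *ᵥ lam' = w := by
      funext b
      have h2 : w b = (Λ' * Λ'ᵀ) (B b) i := by
        simp only [hw]; exact hoff (B b) i (hBi b)
      rw [h2]
      simp [Matrix.mulVec, dotProduct, Matrix.mul_apply, hH'def, hlam']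
    have hCHG : C = H * Gᵀ := by
      ext b a
      simp [hC, Matrix.mul_apply, hHdef, hGdef]
    have hCHG' : C = H' * G'ᵀ := by
      ext b a
      have h2 : C b a = (Λ' * Λ'ᵀ) (B b) (A a) := by
        simp only [hC, Matrix.of_apply]; exact hoff (B b) (A a) (Ne.symm (hABdisj a b))
      rw [h2]
      simp [Matrix.mul_apply, hH'def, hG'def]
    have hCdet : IsUnit C.det := by
      rw [hCHG, Matrix.det_mul, Matrix.det_transpose]
      exact hdetB.mul hdetA
    have hdetH' : IsUnit H'.det := by
      have := hCdet
      rw [hCHG', Matrix.det_mul] at this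
      exact isUnit_of_mul_isUnit_left this
    have hdetG' : IsUnit G'.det := by
      have := hCdet
      rw [hCHG', Matrix.det_mul, Matrix.det_transpose] at this
      exact isUnit_of_mul_isUnit_right this
    have e1 : lam ⬝ᵥ lam = u ⬝ᵥ (C⁻¹ *ᵥ w) := by
      rw [← huG, ← hwH, hCHG]
      exact (dot_identity G H lam hdetA hdetB).symm
    have e2 : lam' ⬝ᵥ lam' = u ⬝ᵥ (C⁻¹ *ᵥ w) := by
      rw [← huG', ← hwH', hCHG']
      exact (dot_identity G' H' lam' hdetG' hdetH').symm
    have hnorm : lam ⬝ᵥ lam = lam' ⬝ᵥ lam' := e1.trans e2.symm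
    have hdiag1 : (Λ * Λᵀ) i i = lam ⬝ᵥ lam := by
      simp [Matrix.mul_apply, dotProduct, hlam]
    have hdiag2 : (Λ' * Λ'ᵀ) i i = lam' ⬝ᵥ lam' := by
      simp [Matrix.mul_apply, dotProduct, hlam']
    have h1 := congrFun (congrFun heq i) i
    simp only [Matrix.add_apply, Matrix.diagonal_apply_eq] at h1
    rw [hdiag1, hdiag2, hnorm] at h1
    linarith
  have hdeq : d = d' := funext hdd
  have hGram : Λ' * Λ'ᵀ = Λ * Λᵀ := by
    rw [hdeq] at heq
    exact (add_right_cancel heq).symm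
  refine ⟨by rw [hdeq], hGram, ?_⟩
  have hinj := glt_mulVec_injective hli hz hpv
  obtain ⟨M, hME, hMo⟩ := exists_orth_factor hinj hGram
  exact ⟨M, signed_perm_of_orth hli hli' hz hpv hz' hpv' hME hMo, hME⟩

lemma exists_AB {m r : ℕ} (δ : Matrix (Fin m) (Fin r) Bool) (hcr : CR δ 1) (i : Fin m) :
    ∃ A B : Fin r → Fin m, (∀ a b, A a ≠ B b) ∧ (∀ a, A a ≠ i) ∧ (∀ a, B a ≠ i) ∧
      (∀ a, δ (A a) a = true) ∧ (∀ a, δ (B a) a = true) ∧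
      Function.Injective A ∧ Function.Injective B := by
  classical
  set t : Fin r × Bool → Finset (Fin m) :=
    fun jb => Finset.univ.filter (fun p => δ p jb.1 = true ∧ p ≠ i) with ht
  have hall : ∀ s : Finset (Fin r × Bool), s.card ≤ (s.biUnion t).card := by
    intro s
    rcases s.eq_empty_or_nonempty with rfl | hs
    · simp
    set S := s.image Prod.fst with hS
    have hSne : S.Nonempty := hs.image _
    set W := Finset.univ.filter (fun p : Fin m => ∃ j ∈ S, δ p j = true) with hW
    have hcard : s.card ≤ 2 * S.card := by
      have hss : s ⊆ S ×ˢ (Finset.univ : Finset Bool) := by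
        intro x hx
        rw [Finset.mem_product]
        exact ⟨Finset.mem_image_of_mem Prod.fst hx, Finset.mem_univ _⟩
      calc s.card ≤ (S ×ˢ (Finset.univ : Finset Bool)).card := Finset.card_le_card hss
        _ = 2 * S.card := by rw [Finset.card_product]; simp [mul_comm]
    have hWcard : 2 * S.card + 1 ≤ W.card := by convert hcr S hSne
    have hsub : W.erase i ⊆ s.biUnion t := by
      intro p hp
      rw [Finset.mem_erase] at hp
      obtain ⟨hpi, hpW⟩ := hp
      rw [hW, Finset.mem_filter] at hpW
      obtain ⟨-, j, hjS, hδ⟩ := hpW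
      rw [hS, Finset.mem_image] at hjS
      obtain ⟨⟨j', b⟩, hmem, hfst⟩ := hjS
      refine Finset.mem_biUnion.mpr ⟨(j', b), hmem, ?_⟩
      rw [ht, Finset.mem_filter]
      exact ⟨Finset.mem_univ _, by rw [hfst]; exact hδ, hpi⟩
    calc s.card ≤ 2 * S.card := hcard
      _ ≤ W.card - 1 := by omega
      _ ≤ (W.erase i).card := by
          have := Finset.pred_card_le_card_erase (s := W) (a := i)
          omega
      _ ≤ (s.biUnion t).card := Finset.card_le_card hsub
  obtain ⟨f, hfinj, hft⟩ := (Finset.all_card_le_biUnion_card_iff_exists_injective t).mp hall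
  have hmem : ∀ jb, δ (f jb) jb.1 = true ∧ f jb ≠ i := by
    intro jb
    have := hft jb
    rw [ht, Finset.mem_filter] at this
    exact this.2
  refine ⟨fun a => f (a, false), fun a => f (a, true), ?_, ?_, ?_, ?_, ?_, ?_, ?_⟩
  · intro a b h
    have := hfinj h
    simp at this
  · exact fun a => (hmem (a, false)).2
  · exact fun a => (hmem (a, true)).2
  · exact fun a => (hmem (a, false)).1
  · exact fun a => (hmem (a, true)).1
  · intro a b h
    have := hfinj h
    exact congrArg Prod.fst this
  · intro a b h
    have := hfinj h
    exact congrArg Prod.fst this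

lemma varianceIdentified_mul {m r : ℕ} {Λ : Matrix (Fin m) (Fin r) ℝ}
    (h : VarianceIdentified Λ) {P : Matrix (Fin r) (Fin r) ℝ} (hP : IsSignedPerm P) :
    VarianceIdentified (Λ * P) := by
  intro Λ' d d' hd hd' hglt' heq
  have hPP := hP.mul_transpose
  have hGram : (Λ * P) * (Λ * P)ᵀ = Λ * Λᵀ := by
    rw [Matrix.transpose_mul, Matrix.mul_assoc, ← Matrix.mul_assoc P, hPP, Matrix.one_mul]
  rw [hGram] at heq
  obtain ⟨h1, h2, Q, hQ, hQE⟩ := h Λ' d d' hd hd' hglt' heq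
  refine ⟨h1, by rw [h2, hGram], ⟨Pᵀ * Q, hP.transpose.mul hQ, ?_⟩⟩
  rw [hQE, Matrix.mul_assoc, ← Matrix.mul_assoc P, hPP, Matrix.one_mul]

/-- Corollary 1(a): if a binary matrix `δ` with unordered GLT structure
satisfies the 3579 counting rule `CR(r,1)`, then, outside a Lebesgue null set in
the parametrization of `Θ_δ` by the nonzero entries, every element of `Θ_δ`
(i.e. every signed permutation of a GLT matrix with pattern `δ`) is variance
identified. -/
theorem counting_rule_implies_variance_identification_ae {m r : ℕ}
    (δ : Matrix (Fin m) (Fin r) Bool) (hglt : IsGLTBool δ) (hcr : CR δ 1) :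
    MeasureTheory.volume
      {x : {p : Fin m × Fin r // δ p.1 p.2 = true} → ℝ |
        ¬ ∀ P : Matrix (Fin r) (Fin r) ℝ, IsSignedPerm P →
          VarianceIdentified (matrixOfPattern δ x * P)} = 0 := by
  classical
  obtain ⟨l, hli, hlδ⟩ := hglt
  choose A B hABdisj hAi hBi hAδ hBδ hAinj hBinj using fun i => exists_AB δ hcr i
  set ι := {p : Fin m × Fin r // δ p.1 p.2 = true} with hι
  -- polynomial matrix
  set N : Matrix (Fin m) (Fin r) (MvPolynomial ι ℝ) :=
    Matrix.of fun i j => if h : δ i j = true then MvPolynomial.X ⟨(i, j), h⟩ else 0 with hN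
  have hmapN : ∀ x : ι → ℝ, N.map (MvPolynomial.eval x) = matrixOfPattern δ x := by
    intro x
    ext i j
    by_cases h : δ i j = true <;> simp [hN, matrixOfPattern, h]
  -- determinant polynomials
  set detp : (Fin r → Fin m) → MvPolynomial ι ℝ :=
    fun E => (N.submatrix E id).det with hdetp
  have hdeteval : ∀ (E : Fin r → Fin m) (x : ι → ℝ),
      MvPolynomial.eval x (detp E) = ((matrixOfPattern δ x).submatrix E id).det := by
    intro E x
    rw [hdetp]
    rw [RingHom.map_det (MvPolynomial.eval x) (N.submatrix E id)]
    congr 1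
    ext a b
    simp only [RingHom.mapMatrix_apply, Matrix.map_apply, Matrix.submatrix_apply]
    rw [← hmapN x]
    rfl
  -- witness nonvanishing for the determinant polynomials
  have hdetne : ∀ i : Fin m, detp (A i) ≠ 0 ∧ detp (B i) ≠ 0 := by
    intro i
    set w : ι → ℝ := fun c => if c.1.1 = A i c.1.2 ∨ c.1.1 = B i c.1.2 then 1 else 0 with hwdef
    have hsubA : (matrixOfPattern δ w).submatrix (A i) id = 1 := by
      ext a b
      simp only [Matrix.submatrix_apply, matrixOfPattern, Matrix.of_apply, id_eq]
      rcases eq_or_ne a b with rfl | hab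
      · rw [dif_pos (hAδ i a)]
        simp [hwdef, Matrix.one_apply]
      · rw [Matrix.one_apply_ne hab]
        by_cases h : δ (A i a) b = true
        · rw [dif_pos h]
          have h1 : ¬ (A i a = A i b) := fun hc => hab (hAinj i hc)
          have h2 : ¬ (A i a = B i b) := hABdisj i a b
          simp [hwdef, h1, h2]
        · rw [dif_neg h]
    have hsubB : (matrixOfPattern δ w).submatrix (B i) id = 1 := by
      ext a b
      simp only [Matrix.submatrix_apply, matrixOfPattern, Matrix.of_apply, id_eq]
      rcases eq_or_ne a b with rfl | hab
      · rw [dif_pos (hBδ i a)]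
        have h2 : ¬ (B i a = A i a) := fun hc => hABdisj i a a hc.symm
        simp [hwdef, h2, Matrix.one_apply]
      · rw [Matrix.one_apply_ne hab]
        by_cases h : δ (B i a) b = true
        · rw [dif_pos h]
          have h1 : ¬ (B i a = B i b) := fun hc => hab (hBinj i hc)
          have h2 : ¬ (B i a = A i b) := fun hc => hABdisj i b a hc.symm
          simp [hwdef, h1, h2]
        · rw [dif_neg h]
    constructor
    · intro h0
      have := hdeteval (A i) w
      rw [h0, hsubA] at this
      simp at this
    · intro h0
      have := hdeteval (B i) w
      rw [h0, hsubB] at this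
      simp at this
  -- the good set
  set Bad := {x : ι → ℝ |
    ¬ ∀ P : Matrix (Fin r) (Fin r) ℝ, IsSignedPerm P →
      VarianceIdentified (matrixOfPattern δ x * P)} with hBad
  have hsub : Bad ⊆ (⋃ j : Fin r, {x : ι → ℝ |
        MvPolynomial.eval x (MvPolynomial.X (⟨(l j, j), (hlδ j).1⟩ : ι)) = 0}) ∪
      ((⋃ i : Fin m, {x : ι → ℝ | MvPolynomial.eval x (detp (A i)) = 0}) ∪
       (⋃ i : Fin m, {x : ι → ℝ | MvPolynomial.eval x (detp (B i)) = 0})) := by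
    intro x hx
    by_contra hmem
    simp only [Set.mem_union, Set.mem_iUnion, not_or, not_exists, Set.mem_setOf_eq] at hmem
    obtain ⟨hpiv, hdA, hdB⟩ := hmem
    apply hx
    intro P hP
    have hΛ : VarianceIdentified (matrixOfPattern δ x) := by
      apply main_det (matrixOfPattern δ x) l hli
      · intro j i hij
        simp [matrixOfPattern, (hlδ j).2 i hij]
      · intro j
        have := hpiv j
        rw [MvPolynomial.eval_X] at this
        simpa [matrixOfPattern, (hlδ j).1] using this
      · intro i
        refine ⟨A i, B i, hABdisj i, hAi i, hBi i, ?_, ?_⟩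
        · rw [isUnit_iff_ne_zero, ← hdeteval]
          exact hdA i
        · rw [isUnit_iff_ne_zero, ← hdeteval]
          exact hdB i
    exact varianceIdentified_mul hΛ hP
  refine measure_mono_null hsub ?_
  refine measure_union_null ?_ (measure_union_null ?_ ?_)
  · rw [measure_iUnion_null_iff]
    intro j
    exact mvpoly_zero_null _ (MvPolynomial.X_ne_zero _)
  · rw [measure_iUnion_null_iff]
    intro i
    exact mvpoly_zero_null _ (hdetne i).1
  · rw [measure_iUnion_null_iff]
    intro i
    exact mvpoly_zero_null _ (hdetne i).2
end

section
/- Let l_1 < ⋯ < l_r be row indices in {1,…,m} satisfying l_j ≤ m − 2(r − j + 1) for every j = 1,…,r, and let δ be the m×r binary matrix of a dense ordered GLT structure with these pivots, i.e., δ_{ij} = 1 if i ≥ l_j and δ_{ij} = 0 otherwise. Then δ satisfies the 3579 counting rule CR(r,1): every combination of q ∈ {1,…,r} columns of δ has at least 2q+1 nonzero rows. Hence condition GLT-AR is sufficient for the row deletion property for dense GLT structures (outside a null set of loading values). -/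
open Matrix

/-- Condition GLT-AR for dense ordered GLT structures: if the pivot rows
`l 0 < ... < l (r-1)` satisfy `l_j ≤ m − 2(r − j + 1)` (in 1-based indexing,
which for 0-based indices reads `(l j) + 1 ≤ m − 2(r − j)`), then the binary
matrix of the dense ordered GLT structure with these pivots (all entries from
the pivot row downwards nonzero) satisfies the 3579 counting rule `CR(r,1)`. -/
theorem dense_GLT_AR_implies_counting_rule {m r : ℕ}
    (l : Fin r → Fin m) (hmono : StrictMono l)
    (hAR : ∀ j : Fin r, (l j : ℕ) + 1 ≤ m - 2 * (r - (j : ℕ))) :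
    CR (Matrix.of fun (i : Fin m) (j : Fin r) => decide (l j ≤ i)) 1 := by
  intro S hS
  obtain ⟨j0, hj0S, hj0min⟩ := S.exists_min_image id hS
  -- The filter set contains Ici (l j0)
  have hsub : Finset.Ici (l j0) ⊆
      @Finset.filter (Fin m) (fun i : Fin m => ∃ j ∈ S, (Matrix.of fun (i : Fin m) (j : Fin r) => decide (l j ≤ i)) i j = true) (fun _ => inferInstance) Finset.univ := by
    intro i hi
    simp only [Finset.mem_filter, Finset.mem_univ, true_and, Matrix.of_apply, decide_eq_true_eq]
    exact ⟨j0, hj0S, Finset.mem_Ici.mp hi⟩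
  have hcard1 : m - (l j0 : ℕ) ≤
      (@Finset.filter (Fin m) (fun i : Fin m => ∃ j ∈ S, (Matrix.of fun (i : Fin m) (j : Fin r) => decide (l j ≤ i)) i j = true) (fun _ => inferInstance) Finset.univ).card := by
    have := Finset.card_le_card hsub
    rwa [Fin.card_Ici] at this
  -- |S| ≤ r - j0
  have hScard : S.card ≤ r - (j0 : ℕ) := by
    have : S ⊆ Finset.Ici j0 := fun j hj => Finset.mem_Ici.mpr (hj0min j hj)
    have := Finset.card_le_card this
    rwa [Fin.card_Ici] at this
  have hAR0 := hAR j0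
  have h2 : 2 * (r - (j0 : ℕ)) + ((l j0 : ℕ) + 1) ≤ m := by omega
  calc 2 * S.card + 1 ≤ 2 * (r - (j0 : ℕ)) + 1 := by omega
    _ ≤ m - (l j0 : ℕ) := by omega
    _ ≤ _ := hcard1
end
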